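/- For every k with 1 ≤ k ≤ m+n−1, the operator T on V ⊗ V commutes with ρ_2(e_k) = E_k ⊗ D_k^{−1} + S^{p(k)} ⊗ E_k: in End_K(V ⊗ V) one has T ∘ ρ_2(e_k) = ρ_2(e_k) ∘ T. -/
import Mathlib


set_option synthInstance.maxHeartbeats 1000000
set_option maxHeartbeats 1000000

open scoped BigOperators Kronecker

section CommonDefs

variable {R : Type*} [CommRing R]

/-- ℤ₂-degree of the basis vector `v_{k+1}` (0-based index `k`): `0` if `k < m`, else `1`. -/
def deg (m : ℕ) {N : ℕ} (k : Fin N) : ℕ := if (k : ℕ) < m then 0 else 1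

/-- The sign `(−1)^{|v_k||v_l|}`. -/
def sgn (R : Type*) [CommRing R] (m : ℕ) {N : ℕ} (k l : Fin N) : R :=
  (-1 : R) ^ (deg m k * deg m l)

/-- Entries (row = input vector) of the operator `T` on `V ⊗ V`, where `x` plays the
role of `q` and `xinv` that of `q⁻¹`:  `T(v_k ⊗ v_k) = q·v_k ⊗ v_k` if `k ≤ m`,
`T(v_k ⊗ v_k) = −q⁻¹·v_k ⊗ v_k` if `k > m`,
`T(v_k ⊗ v_l) = (−1)^{|v_k||v_l|} v_l ⊗ v_k + (q−q⁻¹) v_k ⊗ v_l` if `k < l`, and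
`T(v_k ⊗ v_l) = (−1)^{|v_k||v_l|} v_l ⊗ v_k` if `k > l`. -/
def Tent (x xinv : R) (m : ℕ) {N : ℕ} (p p' : Fin N × Fin N) : R :=
  if p.1 = p.2 then (if (p.1 : ℕ) < m then x else -xinv) * (if p' = p then 1 else 0)
  else if (p.1 : ℕ) < (p.2 : ℕ) then
    sgn R m p.1 p.2 * (if p' = (p.2, p.1) then 1 else 0)
      + (x - xinv) * (if p' = p then 1 else 0)
  else sgn R m p.1 p.2 * (if p' = (p.2, p.1) then 1 else 0)

/-- Entries of the signed swap `P(v_k ⊗ v_l) = (−1)^{|v_k||v_l|} v_l ⊗ v_k`. -/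
def Pent (R : Type*) [CommRing R] (m : ℕ) {N : ℕ} (p p' : Fin N × Fin N) : R :=
  sgn R m p.1 p.2 * (if p' = (p.2, p.1) then 1 else 0)

/-- The operator `Id^{⊗ i} ⊗ E ⊗ Id^{⊗ (r−i−2)}` on `V^{⊗ r}` obtained from a two-site
operator `E` acting on the (0-based) tensor positions `i` and `i+1`. -/
def twoSiteOp {N : ℕ} (E : Fin N × Fin N → Fin N × Fin N → R) (r i : ℕ) (h : i + 1 < r) :
    Matrix (Fin r → Fin N) (Fin r → Fin N) R := fun a b =>
  E (a ⟨i, Nat.lt_of_succ_lt h⟩, a ⟨i + 1, h⟩) (b ⟨i, Nat.lt_of_succ_lt h⟩, b ⟨i + 1, h⟩) *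
    ∏ j ∈ Finset.univ \ ({⟨i, Nat.lt_of_succ_lt h⟩, ⟨i + 1, h⟩} : Finset (Fin r)),
      (if a j = b j then (1 : R) else 0)

/-- The Hecke operator `T_{i+1} = Id^{⊗ i} ⊗ T ⊗ Id^{⊗ (r−i−2)}` on `V^{⊗ r}`
(here `i` is the 0-based position of the first tensor factor it acts on). -/
def heckeOp (x xinv : R) (m : ℕ) {N : ℕ} (r i : ℕ) (h : i + 1 < r) :
    Matrix (Fin r → Fin N) (Fin r → Fin N) R :=
  twoSiteOp (Tent x xinv m) r i h

/-- The signed swap operator `P_{i+1} = Id^{⊗ i} ⊗ P ⊗ Id^{⊗ (r−i−2)}` on `V^{⊗ r}`. -/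
def swapOp (R : Type*) [CommRing R] (m : ℕ) {N : ℕ} (r i : ℕ) (h : i + 1 < r) :
    Matrix (Fin r → Fin N) (Fin r → Fin N) R :=
  twoSiteOp (Pent R m) r i h

/-- The parity operator `S v_j = (−1)^{|v_j|} v_j`. -/
def Smat (R : Type*) [CommRing R] (m : ℕ) {N : ℕ} : Matrix (Fin N) (Fin N) R :=
  fun a b => if a = b then (-1 : R) ^ deg m a else 0

/-- The diagonal operator `Q_b v_j = q^{δ_{bj}} v_j` (`x` playing the role of `q`, or of
`q⁻¹` for the inverse operator). -/
def Qmat (x : R) {N : ℕ} (b0 : Fin N) : Matrix (Fin N) (Fin N) R :=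
  fun a b => if a = b then (if a = b0 then x else 1) else 0

/-- `E_k v_{k+1} = v_k`, `E_k v_j = 0` otherwise (0-based `k`; row = input). -/
def Emat (R : Type*) [CommRing R] {N : ℕ} (k : ℕ) : Matrix (Fin N) (Fin N) R :=
  fun a b => if (a : ℕ) = k + 1 ∧ (b : ℕ) = k then 1 else 0

/-- `F_k v_k = v_{k+1}`, `F_k v_j = 0` otherwise (0-based `k`; row = input). -/
def Fmat (R : Type*) [CommRing R] {N : ℕ} (k : ℕ) : Matrix (Fin N) (Fin N) R :=
  fun a b => if (a : ℕ) = k ∧ (b : ℕ) = k + 1 then 1 else 0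

/-- The diagonal operator `D_k v_j = q^{s(k)δ_{kj} − s(k+1)δ_{k+1,j}} v_j`
(0-based `k`, so `s(k) = 1` iff `k < m`, and `s(k) = −1` otherwise). -/
def Dmat (x xinv : R) (m : ℕ) {N : ℕ} (k : ℕ) : Matrix (Fin N) (Fin N) R :=
  fun a b => if a = b then
    (if (a : ℕ) = k then (if k < m then x else xinv)
     else if (a : ℕ) = k + 1 then (if k + 1 < m then xinv else x) else 1)
  else 0

/-- The inverse `D_k⁻¹` of `Dmat` (obtained by exchanging `q` and `q⁻¹`). -/
def Dinvmat (x xinv : R) (m : ℕ) {N : ℕ} (k : ℕ) : Matrix (Fin N) (Fin N) R :=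
  Dmat xinv x m k

/-- `S^{p(k)}`, where `p(k) = 1` if the 0-based `k` satisfies `k + 1 = m` (the odd simple
root) and `p(k) = 0` otherwise. -/
def SPmat (R : Type*) [CommRing R] (m : ℕ) {N : ℕ} (k : ℕ) : Matrix (Fin N) (Fin N) R :=
  if k + 1 = m then Smat R m else 1

/-- Kronecker (tensor) product of `r` one-site operators, as a matrix on `V^{⊗ r}`. -/
def kron {N r : ℕ} (M : Fin r → Matrix (Fin N) (Fin N) R) :
    Matrix (Fin r → Fin N) (Fin r → Fin N) R :=
  fun a b => ∏ j, M j (a j) (b j)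

/-- `ρ_r(σ) = S^{⊗ r}`. -/
def rhoSigma (R : Type*) [CommRing R] (m : ℕ) {N : ℕ} (r : ℕ) :
    Matrix (Fin r → Fin N) (Fin r → Fin N) R :=
  kron fun _ => Smat R m

/-- `ρ_r(q^{δ_b}) = Q_b^{⊗ r}` (and its inverse, substituting `q⁻¹` for `x`). -/
def rhoQ (x : R) {N : ℕ} (r : ℕ) (b0 : Fin N) :
    Matrix (Fin r → Fin N) (Fin r → Fin N) R :=
  kron fun _ => Qmat x b0

/-- `ρ_r(e_k) = Σ_{j=1}^{r} (S^{p(k)})^{⊗(j−1)} ⊗ E_k ⊗ (D_k^{−1})^{⊗(r−j)}`. -/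
def rhoE (x xinv : R) (m : ℕ) {N : ℕ} (r : ℕ) (k : ℕ) :
    Matrix (Fin r → Fin N) (Fin r → Fin N) R :=
  ∑ p : Fin r, kron fun j =>
    if j < p then SPmat R m k else if j = p then Emat R k else Dinvmat x xinv m k

/-- `ρ_r(f_k) = Σ_{j=1}^{r} (S^{p(k)}D_k)^{⊗(j−1)} ⊗ F_k ⊗ Id^{⊗(r−j)}`. -/
def rhoF (x xinv : R) (m : ℕ) {N : ℕ} (r : ℕ) (k : ℕ) :
    Matrix (Fin r → Fin N) (Fin r → Fin N) R :=
  ∑ p : Fin r, kron fun j =>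
    if j < p then SPmat R m k * Dmat x xinv m k else if j = p then Fmat R k else 1

/-- The generators `T_1, …, T_{r−1}` of the image of the sign `q`-permutation
representation of the Iwahori–Hecke algebra on `V^{⊗ r}`. -/
def heckeGens (x xinv : R) (m : ℕ) {N : ℕ} (r : ℕ) :
    Set (Matrix (Fin r → Fin N) (Fin r → Fin N) R) :=
  {M | ∃ (i : ℕ) (h : i + 1 < r), M = heckeOp x xinv m r i h}

/-- The signed-swap generators `P_1, …, P_{r−1}` (the `q → 1` specialization). -/
def swapGens (R : Type*) [CommRing R] (m : ℕ) {N : ℕ} (r : ℕ) :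
    Set (Matrix (Fin r → Fin N) (Fin r → Fin N) R) :=
  {M | ∃ (i : ℕ) (h : i + 1 < r), M = swapOp R m r i h}

/-- The generators `ρ_r(σ)`, `ρ_r(q^{± δ_b})` (`1 ≤ b ≤ N`), `ρ_r(e_k)`, `ρ_r(f_k)`
(`1 ≤ k ≤ N−1`) of the image of the vector representation of `U_q^σ(gl(m,n))`. -/
def quantumGens (x xinv : R) (m : ℕ) {N : ℕ} (r : ℕ) :
    Set (Matrix (Fin r → Fin N) (Fin r → Fin N) R) :=
  {rhoSigma R m r} ∪ (Set.range fun b : Fin N => rhoQ x r b)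
    ∪ (Set.range fun b : Fin N => rhoQ xinv r b)
    ∪ (Set.range fun k : Fin (N - 1) => rhoE x xinv m r (k : ℕ))
    ∪ (Set.range fun k : Fin (N - 1) => rhoF x xinv m r (k : ℕ))

end CommonDefs

/-- The base field `K = ℚ(q)` of rational functions over `ℚ`. -/
abbrev 𝕂 : Type := RatFunc ℚ

/-- The indeterminate `q` of `K = ℚ(q)`. -/
noncomputable def q : 𝕂 := RatFunc.X

/-- The operator `T` on `V ⊗ V` as a matrix indexed by pairs. -/
noncomputable def T2 (m : ℕ) {N : ℕ} : Matrix (Fin N × Fin N) (Fin N × Fin N) 𝕂 :=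
  fun p p' => Tent q q⁻¹ m p p'


section AuxLemmas

set_option maxRecDepth 8000
set_option maxHeartbeats 4000000

variable {R : Type*} [CommRing R] {N : ℕ}

lemma Tent_eq (x xinv : R) (m : ℕ) (a b c d : Fin N) :
    Tent x xinv m (a, b) (c, d)
      = (if a = b then 0 else sgn R m a b) * (if c = b ∧ d = a then 1 else 0)
        + (if a = b then (if (a : ℕ) < m then x else -xinv)
            else if (a : ℕ) < (b : ℕ) then x - xinv else 0)
          * (if c = a ∧ d = b then 1 else 0) := by
  by_cases hab : a = b
  · subst hab
    simp [Tent, Prod.ext_iff, and_comm]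
  · have hab' : (a : ℕ) ≠ (b : ℕ) := fun h => hab (Fin.ext h)
    rcases Nat.lt_or_ge (a : ℕ) (b : ℕ) with h | h
    · simp [Tent, hab, h, Prod.ext_iff]
    · have h2 : ¬ (a : ℕ) < (b : ℕ) := not_lt.mpr h
      simp [Tent, hab, h2, Prod.ext_iff]

lemma mul_ED_apply (M : Matrix (Fin N × Fin N) (Fin N × Fin N) R)
    (D : Matrix (Fin N) (Fin N) R) (hD : ∀ a b, a ≠ b → D a b = 0)
    (K : ℕ) (hK : K + 1 < N) (p : Fin N × Fin N) (e f : Fin N) :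
    ((M * (Emat R K ⊗ₖ D)) : Matrix (Fin N × Fin N) (Fin N × Fin N) R) p (e, f)
      = (if (e : ℕ) = K then D f f * M p (⟨K + 1, hK⟩, f) else 0) := by
  rw [Matrix.mul_apply, Fintype.sum_prod_type]
  have : ∀ c d : Fin N, M p (c, d) * (Emat R K ⊗ₖ D) (c, d) (e, f)
      = (if c = ⟨K + 1, hK⟩ then 1 else 0) * (if d = f then 1 else 0) *
        ((if (e : ℕ) = K then 1 else 0) * D f f * M p (⟨K + 1, hK⟩, f)) := by
    intro c d
    by_cases hd : d = f
    · subst hd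
      by_cases hc : c = ⟨K + 1, hK⟩
      · subst hc
        simp [Emat, Matrix.kroneckerMap_apply, Fin.ext_iff]
        all_goals split_ifs <;> ring
      · have h2 : (c : ℕ) ≠ K + 1 := fun h => hc (Fin.ext h)
        simp [Emat, Matrix.kroneckerMap_apply, h2, hc]
    · simp [Emat, Matrix.kroneckerMap_apply, hd, hD d f hd]
      all_goals split_ifs <;> ring
  simp only [this]
  simp [Finset.sum_ite_eq', ← Finset.sum_mul]
  all_goals split_ifs <;> ring

lemma mul_SE_apply (M : Matrix (Fin N × Fin N) (Fin N × Fin N) R)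
    (S : Matrix (Fin N) (Fin N) R) (hS : ∀ a b, a ≠ b → S a b = 0)
    (K : ℕ) (hK : K + 1 < N) (p : Fin N × Fin N) (e f : Fin N) :
    ((M * (S ⊗ₖ Emat R K)) : Matrix (Fin N × Fin N) (Fin N × Fin N) R) p (e, f)
      = (if (f : ℕ) = K then S e e * M p (e, ⟨K + 1, hK⟩) else 0) := by
  rw [Matrix.mul_apply, Fintype.sum_prod_type]
  have : ∀ c d : Fin N, M p (c, d) * (S ⊗ₖ Emat R K) (c, d) (e, f)
      = (if c = e then 1 else 0) * (if d = ⟨K + 1, hK⟩ then 1 else 0) *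
        ((if (f : ℕ) = K then 1 else 0) * S e e * M p (e, ⟨K + 1, hK⟩)) := by
    intro c d
    by_cases hc : c = e
    · subst hc
      by_cases hd : d = ⟨K + 1, hK⟩
      · subst hd
        simp [Emat, Matrix.kroneckerMap_apply, Fin.ext_iff]
        all_goals split_ifs <;> ring
      · have h2 : (d : ℕ) ≠ K + 1 := fun h => hd (Fin.ext h)
        simp [Emat, Matrix.kroneckerMap_apply, h2, hd]
    · simp [Emat, Matrix.kroneckerMap_apply, hc, hS c e hc]
  simp only [this]
  simp [Finset.sum_ite_eq', ← Finset.sum_mul]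
  all_goals split_ifs <;> ring

lemma ED_mul_apply (M : Matrix (Fin N × Fin N) (Fin N × Fin N) R)
    (D : Matrix (Fin N) (Fin N) R) (hD : ∀ a b, a ≠ b → D a b = 0)
    (K : ℕ) (hK : K + 1 < N) (p : Fin N × Fin N) (a b : Fin N) :
    (((Emat R K ⊗ₖ D) * M) : Matrix (Fin N × Fin N) (Fin N × Fin N) R) (a, b) p
      = (if (a : ℕ) = K + 1 then D b b * M (⟨K, Nat.lt_of_succ_lt hK⟩, b) p else 0) := by
  rw [Matrix.mul_apply, Fintype.sum_prod_type]
  have : ∀ c d : Fin N, (Emat R K ⊗ₖ D) (a, b) (c, d) * M (c, d) p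
      = (if c = ⟨K, Nat.lt_of_succ_lt hK⟩ then 1 else 0) * (if d = b then 1 else 0) *
        ((if (a : ℕ) = K + 1 then 1 else 0) * D b b * M (⟨K, Nat.lt_of_succ_lt hK⟩, b) p) := by
    intro c d
    by_cases hd : d = b
    · subst hd
      by_cases hc : c = ⟨K, Nat.lt_of_succ_lt hK⟩
      · subst hc
        simp [Emat, Matrix.kroneckerMap_apply, Fin.ext_iff]
        all_goals split_ifs <;> ring
      · have h2 : (c : ℕ) ≠ K := fun h => hc (Fin.ext h)
        simp [Emat, Matrix.kroneckerMap_apply, h2, hc]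
    · simp [Emat, Matrix.kroneckerMap_apply, hd, hD b d (fun h => hd h.symm)]
  simp only [this]
  simp [Finset.sum_ite_eq', ← Finset.sum_mul]
  all_goals split_ifs <;> ring

lemma SE_mul_apply (M : Matrix (Fin N × Fin N) (Fin N × Fin N) R)
    (S : Matrix (Fin N) (Fin N) R) (hS : ∀ a b, a ≠ b → S a b = 0)
    (K : ℕ) (hK : K + 1 < N) (p : Fin N × Fin N) (a b : Fin N) :
    (((S ⊗ₖ Emat R K) * M) : Matrix (Fin N × Fin N) (Fin N × Fin N) R) (a, b) p
      = (if (b : ℕ) = K + 1 then S a a * M (a, ⟨K, Nat.lt_of_succ_lt hK⟩) p else 0) := by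
  rw [Matrix.mul_apply, Fintype.sum_prod_type]
  have : ∀ c d : Fin N, (S ⊗ₖ Emat R K) (a, b) (c, d) * M (c, d) p
      = (if c = a then 1 else 0) * (if d = ⟨K, Nat.lt_of_succ_lt hK⟩ then 1 else 0) *
        ((if (b : ℕ) = K + 1 then 1 else 0) * S a a * M (a, ⟨K, Nat.lt_of_succ_lt hK⟩) p) := by
    intro c d
    by_cases hc : c = a
    · subst hc
      by_cases hd : d = ⟨K, Nat.lt_of_succ_lt hK⟩
      · subst hd
        simp [Emat, Matrix.kroneckerMap_apply, Fin.ext_iff]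
        all_goals split_ifs <;> ring
      · have h2 : (d : ℕ) ≠ K := fun h => hd (Fin.ext h)
        simp [Emat, Matrix.kroneckerMap_apply, h2, hd]
    · simp [Emat, Matrix.kroneckerMap_apply, hc, hS a c (fun h => hc h.symm)]
  simp only [this]
  simp [Finset.sum_ite_eq', ← Finset.sum_mul]
  all_goals split_ifs <;> ring

lemma key_scalar (x xinv : R) (hx : x * xinv = 1) (m : ℕ) (K : ℕ) (hK : K + 1 < N)
    (a b e f : Fin N) :
    (if (e : ℕ) = K then Dinvmat x xinv m K f f * Tent x xinv m (a, b) (⟨K + 1, hK⟩, f) else 0)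
      + (if (f : ℕ) = K then SPmat R m K e e * Tent x xinv m (a, b) (e, ⟨K + 1, hK⟩) else 0)
    = (if (a : ℕ) = K + 1 then
          Dinvmat x xinv m K b b * Tent x xinv m (⟨K, Nat.lt_of_succ_lt hK⟩, b) (e, f) else 0)
      + (if (b : ℕ) = K + 1 then
          SPmat R m K a a * Tent x xinv m (a, ⟨K, Nat.lt_of_succ_lt hK⟩) (e, f) else 0) := by
  have tri : ∀ z : Fin N, (z : ℕ) = K ∨ (z : ℕ) = K + 1
      ∨ ((z : ℕ) ≠ K ∧ (z : ℕ) ≠ K + 1 ∧ K ≠ (z : ℕ) ∧ K + 1 ≠ (z : ℕ)) :=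
    fun z => by omega
  by_cases hm : K + 1 = m
  · simp only [Tent_eq, Dinvmat, Dmat, SPmat, Smat, sgn, deg, hm, Matrix.one_apply,
      Fin.ext_iff, Prod.mk.injEq, ite_true, ite_false]
    rw [← hm]
    rcases tri a with ha | ha | ⟨ha1, ha2, ha3, ha4⟩ <;>
      rcases tri b with hb | hb | ⟨hb1, hb2, hb3, hb4⟩ <;>
      (try simp_all) <;>
      (try split_ifs) <;>
      first
        | rfl
        | (exfalso; omega)
        | ring1
        | linear_combination hx
        | linear_combination -hx
  · simp only [Tent_eq, Dinvmat, Dmat, SPmat, Smat, sgn, deg, hm, Matrix.one_apply,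
      Fin.ext_iff, Prod.mk.injEq, ite_true, ite_false]
    rcases tri a with ha | ha | ⟨ha1, ha2, ha3, ha4⟩ <;>
      rcases tri b with hb | hb | ⟨hb1, hb2, hb3, hb4⟩ <;>
      (try simp_all) <;>
      (try split_ifs) <;>
      first
        | rfl
        | (exfalso; omega)
        | ring1
        | linear_combination hx
        | linear_combination -hx

end AuxLemmas

/-- For every `k` with `1 ≤ k ≤ m+n−1`, the operator `T` on `V ⊗ V`
commutes with `ρ_2(e_k) = E_k ⊗ D_k⁻¹ + S^{p(k)} ⊗ E_k`. -/
theorem T_commutes_with_rho2_e (m n : ℕ) (hm : 1 ≤ m) (hn : 1 ≤ n)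
    (k : ℕ) (hk1 : 1 ≤ k) (hk2 : k ≤ m + n - 1) :
    T2 m (N := m + n)
        * (Emat 𝕂 (N := m + n) (k - 1) ⊗ₖ Dinvmat q q⁻¹ m (N := m + n) (k - 1)
            + SPmat 𝕂 m (N := m + n) (k - 1) ⊗ₖ Emat 𝕂 (N := m + n) (k - 1))
      = (Emat 𝕂 (N := m + n) (k - 1) ⊗ₖ Dinvmat q q⁻¹ m (N := m + n) (k - 1)
            + SPmat 𝕂 m (N := m + n) (k - 1) ⊗ₖ Emat 𝕂 (N := m + n) (k - 1))
        * T2 m := by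
  have hK : (k - 1) + 1 < m + n := by omega
  have hq : q * q⁻¹ = 1 := mul_inv_cancel₀ (by simpa [q] using (RatFunc.X_ne_zero (K := ℚ)))
  have hDdiag : ∀ a b : Fin (m + n), a ≠ b → Dinvmat q q⁻¹ m (k - 1) a b = 0 := by
    intro a b h
    simp [Dinvmat, Dmat, h]
  have hSdiag : ∀ a b : Fin (m + n), a ≠ b → SPmat 𝕂 m (k - 1) a b = 0 := by
    intro a b h
    unfold SPmat
    split_ifs
    · simp [Smat, h]
    · exact Matrix.one_apply_ne h
  ext ⟨a, b⟩ ⟨e, f⟩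
  rw [Matrix.mul_add, Matrix.add_mul, Matrix.add_apply, Matrix.add_apply,
    mul_ED_apply _ _ hDdiag _ hK, mul_SE_apply _ _ hSdiag _ hK,
    ED_mul_apply _ _ hDdiag _ hK, SE_mul_apply _ _ hSdiag _ hK]
  have := key_scalar (R := 𝕂) q q⁻¹ hq m (k - 1) hK a b e f
  simpa [T2] using this
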